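/- The supremum of |z₁² - z₂² + c·z₁z₂| over (z₁,z₂) ∈ ℂ² with max(|z₁|,|z₂|) ≤ 1 equals (4 + c²)^(1/2), for every real c ≥ 0. -/

import Mathlib

theorem stmt_8 (c : ℝ) (hc : 0 ≤ c) :
    sSup {y : ℝ | ∃ z₁ z₂ : ℂ, ‖z₁‖ ≤ 1 ∧ ‖z₂‖ ≤ 1 ∧
        y = ‖z₁ ^ 2 - z₂ ^ 2 + (c : ℂ) * z₁ * z₂‖} =
      Real.sqrt (4 + c ^ 2) := by
  have h4c : (0:ℝ) ≤ 4 + c ^ 2 := by positivity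
  have hub : ∀ y ∈ {y : ℝ | ∃ z₁ z₂ : ℂ, ‖z₁‖ ≤ 1 ∧ ‖z₂‖ ≤ 1 ∧
      y = ‖z₁ ^ 2 - z₂ ^ 2 + (c : ℂ) * z₁ * z₂‖}, y ≤ Real.sqrt (4 + c ^ 2) := by
    rintro y ⟨z₁, z₂, h1, h2, rfl⟩
    set w : ℂ := z₁ ^ 2 - z₂ ^ 2 + (c : ℂ) * z₁ * z₂ with hw
    have hsq : ‖w‖ ^ 2 ≤ 4 + c ^ 2 := by
      have hre : ‖w‖ ^ 2 = w.re ^ 2 + w.im ^ 2 := by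
        rw [Complex.sq_norm, Complex.normSq_apply]; ring
      have hwre : w.re = z₁.re ^ 2 - z₁.im ^ 2 - (z₂.re ^ 2 - z₂.im ^ 2)
          + c * (z₁.re * z₂.re - z₁.im * z₂.im) := by
        simp [hw, Complex.add_re, Complex.sub_re, Complex.mul_re, Complex.mul_im, pow_two]
        ring
      have hwim : w.im = 2 * z₁.re * z₁.im - 2 * z₂.re * z₂.im
          + c * (z₁.re * z₂.im + z₁.im * z₂.re) := by
        simp [hw, Complex.add_im, Complex.sub_im, Complex.mul_re, Complex.mul_im, pow_two]
        ring
      have ha : z₁.re ^ 2 + z₁.im ^ 2 ≤ 1 := by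
        have h := h1
        nlinarith [norm_nonneg z₁, Complex.sq_norm z₁, Complex.normSq_apply z₁]
      have hb : z₂.re ^ 2 + z₂.im ^ 2 ≤ 1 := by
        have h := h2
        nlinarith [norm_nonneg z₂, Complex.sq_norm z₂, Complex.normSq_apply z₂]
      rw [hre, hwre, hwim]
      set a := z₁.re; set b := z₁.im; set d := z₂.re; set e := z₂.im
      nlinarith [sq_nonneg (4*(a*d+b*e) - c*(a^2+b^2-d^2-e^2)),
        mul_nonneg h4c (mul_nonneg (by nlinarith : (0:ℝ) ≤ 2 - (a^2+b^2) - (d^2+e^2))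
          (by positivity : (0:ℝ) ≤ 2 + (a^2+b^2) + (d^2+e^2))),
        sq_nonneg c, sq_nonneg (a*d+b*e)]
    have := Real.sqrt_le_sqrt hsq
    rwa [Real.sqrt_sq (norm_nonneg w)] at this
  have hmem : Real.sqrt (4 + c ^ 2) ∈ {y : ℝ | ∃ z₁ z₂ : ℂ, ‖z₁‖ ≤ 1 ∧ ‖z₂‖ ≤ 1 ∧
      y = ‖z₁ ^ 2 - z₂ ^ 2 + (c : ℂ) * z₁ * z₂‖} := by
    refine ⟨1, Complex.I, by simp, by simp, ?_⟩
    have h1 : (1:ℂ) ^ 2 - Complex.I ^ 2 + (c : ℂ) * 1 * Complex.I = 2 + c * Complex.I := by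
      simp [Complex.I_sq]; ring
    rw [h1]
    have hre : ((2:ℂ) + c * Complex.I).re = 2 := by simp
    have him : ((2:ℂ) + c * Complex.I).im = c := by simp
    rw [Complex.norm_def, Complex.normSq_apply, hre, him]
    rw [show (2:ℝ) * 2 + c * c = 4 + c ^ 2 by ring]
  exact le_antisymm (Real.sSup_le hub (Real.sqrt_nonneg _))
    (le_csSup ⟨_, hub⟩ hmem)
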